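/- h(r) tends to −∞ as r tends to 0 from the right, i.e. Tendsto h (𝓝[>] 0) atBot. -/

import Mathlib

open MeasureTheory Real Filter

/-- `u r z = √(z(1−rz)/(z+r))`, the real branch of `|w_r|` on `(0, 1/r)`. -/
noncomputable def u (r z : ℝ) : ℝ := Real.sqrt (z * (1 - r * z) / (z + r))

/-- The period function `h` of the candidate maximal Klein bottles. -/
noncomputable def h (r : ℝ) : ℝ :=
  ∫ z in (0:ℝ)..(1/r),
    -2 * u r z * (-1 + z + r * (2 - 3 * z + r * (-4 + 4 * r + 3 * z))) / (r + z)

/-- `A₁ r = ∫₀^{1/r} u_r(z) dz`. -/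
noncomputable def A₁ (r : ℝ) : ℝ := ∫ z in (0:ℝ)..(1/r), u r z

/-- `A₂ r = ∫₀^{1/r} u_r(z)/(z+r) dz`. -/
noncomputable def A₂ (r : ℝ) : ℝ := ∫ z in (0:ℝ)..(1/r), u r z / (z + r)

lemma u_nonneg (r z : ℝ) : 0 ≤ u r z := Real.sqrt_nonneg _

lemma u_le_one {r z : ℝ} (hr : 0 < r) (hz : 0 ≤ z) : u r z ≤ 1 := by
  rw [u, show (1:ℝ) = Real.sqrt 1 from (Real.sqrt_one).symm]
  apply Real.sqrt_le_sqrt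
  rw [Real.sqrt_one]
  rw [div_le_one (by linarith)]
  nlinarith [sq_nonneg z]

lemma u_cont {r : ℝ} (hr : 0 < r) : ContinuousOn (u r) (Set.Ici 0) := by
  apply Real.continuous_sqrt.comp_continuousOn
  apply ContinuousOn.div (by fun_prop) (by fun_prop)
  intro z hz
  simp only [Set.mem_Ici] at hz
  positivity

lemma u_ge_half {r z : ℝ} (hr : 0 < r) (hr4 : r ≤ 1/4) (h1 : 1 ≤ z) (h2 : z ≤ 1/(2*r)) :
    1/2 ≤ u r z := by
  have hrz : r * z ≤ 1/2 := by
    rw [le_div_iff₀ (by positivity)] at h2; nlinarith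
  have harg : (1:ℝ)/4 ≤ z * (1 - r * z) / (z + r) := by
    rw [le_div_iff₀ (by linarith)]
    nlinarith
  calc (1:ℝ)/2 = Real.sqrt (1/4) := by
        rw [show (1:ℝ)/4 = (1/2)^2 by norm_num, Real.sqrt_sq (by norm_num)]
    _ ≤ _ := Real.sqrt_le_sqrt harg

noncomputable def f (r z : ℝ) : ℝ :=
  -2 * u r z * (-1 + z + r * (2 - 3 * z + r * (-4 + 4 * r + 3 * z))) / (r + z)

lemma f_id {r z : ℝ} (hr : 0 < r) (hz : 0 ≤ z) :
    f r z = -2*(1-3*r+3*r^2) * u r z + 2*(1-r+r^2-r^3) * (u r z / (z + r)) := by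
  have hzr : r + z ≠ 0 := by positivity
  have hzr' : z + r ≠ 0 := by positivity
  rw [f]
  field_simp
  ring

lemma f_bound {r z : ℝ} (hr : 0 < r) (hr4 : r ≤ 1/4) (hz : 0 ≤ z) :
    f r z ≤ -(1/2) * u r z + 2 * (z + r)⁻¹ := by
  rw [f_id hr hz]
  have h1 := u_nonneg r z
  have h2 := u_le_one hr hz
  have h3 : 0 < z + r := by positivity
  have h4 : 0 < (z + r)⁻¹ := by positivity
  have key : u r z / (z + r) ≤ (z + r)⁻¹ := by
    rw [div_eq_mul_inv]; nlinarith
  have hd : 0 ≤ u r z / (z + r) := by positivity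
  have c1 : (1:ℝ)/2 ≤ 2*(1-3*r+3*r^2) := by nlinarith [sq_nonneg (r-1/2)]
  have t1 : -2*(1-3*r+3*r^2) * u r z ≤ -(1/2) * u r z := by nlinarith
  have c2 : (0:ℝ) ≤ 2*(1-r+r^2-r^3) := by nlinarith [sq_nonneg r]
  have c3 : 2*(1-r+r^2-r^3) ≤ 2 := by nlinarith [sq_nonneg r]
  have t2 : 2*(1-r+r^2-r^3) * (u r z / (z + r)) ≤ 2 * (z + r)⁻¹ :=
    calc 2*(1-r+r^2-r^3) * (u r z / (z + r)) ≤ 2 * (u r z / (z + r)) :=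
          mul_le_mul_of_nonneg_right c3 hd
      _ ≤ 2 * (z + r)⁻¹ := by linarith
  linarith

lemma f_cont {r : ℝ} (hr : 0 < r) : ContinuousOn (f r) (Set.Ici 0) := by
  apply ContinuousOn.div
  · exact (continuousOn_const.mul (u_cont hr)).mul (Continuous.continuousOn (by continuity))
  · fun_prop
  · intro z hz; simp only [Set.mem_Ici] at hz; positivity


lemma uIcc_sub {a b : ℝ} (ha : 0 ≤ a) (hb : 0 ≤ b) : Set.uIcc a b ⊆ Set.Ici 0 := by
  intro x hx
  rcases Set.mem_uIcc.mp hx with h | h <;> exact Set.mem_Ici.mpr (by linarith [h.1])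

lemma u_intble {r a b : ℝ} (hr : 0 < r) (ha : 0 ≤ a) (hb : 0 ≤ b) :
    IntervalIntegrable (u r) volume a b :=
  ((u_cont hr).mono (uIcc_sub ha hb)).intervalIntegrable

lemma f_intble {r a b : ℝ} (hr : 0 < r) (ha : 0 ≤ a) (hb : 0 ≤ b) :
    IntervalIntegrable (f r) volume a b :=
  ((f_cont hr).mono (uIcc_sub ha hb)).intervalIntegrable

lemma g_cont {r : ℝ} (hr : 0 < r) :
    ContinuousOn (fun z => -(1/2) * u r z + 2 * (z + r)⁻¹) (Set.Ici 0) := by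
  apply ContinuousOn.add (continuousOn_const.mul (u_cont hr))
  apply ContinuousOn.mul continuousOn_const
  apply ContinuousOn.inv₀ (by fun_prop)
  intro z hz; simp only [Set.mem_Ici] at hz; positivity

lemma g_intble {r a b : ℝ} (hr : 0 < r) (ha : 0 ≤ a) (hb : 0 ≤ b) :
    IntervalIntegrable (fun z => -(1/2) * u r z + 2 * (z + r)⁻¹) volume a b :=
  ((g_cont hr).mono (uIcc_sub ha hb)).intervalIntegrable

lemma inv_integral {r : ℝ} (hr : 0 < r) :
    ∫ z in (0:ℝ)..(1/r), (z + r)⁻¹ = Real.log ((1/r + r)/r) := by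
  have := intervalIntegral.integral_comp_add_right (a := 0) (b := 1/r) (fun x => x⁻¹) r
  rw [this, zero_add, integral_inv (by
    have h1 : (0:ℝ) < 1/r := by positivity
    intro hmem
    rcases (Set.mem_uIcc.mp hmem) with h | h <;> linarith [h.1, h.2])]

lemma h_le {r : ℝ} (hr : 0 < r) (hr4 : r ≤ 1/4) :
    h r ≤ -(1/2) * A₁ r + 2 * Real.log ((1/r + r)/r) := by
  have hir : (0:ℝ) ≤ 1/r := by positivity
  have step1 : h r ≤ ∫ z in (0:ℝ)..(1/r), (-(1/2) * u r z + 2 * (z + r)⁻¹) := by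
    apply intervalIntegral.integral_mono_on (by positivity) (f_intble hr le_rfl hir)
      (g_intble hr le_rfl hir)
    intro z hz
    exact f_bound hr hr4 hz.1
  have step2 : (∫ z in (0:ℝ)..(1/r), (-(1/2) * u r z + 2 * (z + r)⁻¹))
      = -(1/2) * A₁ r + 2 * Real.log ((1/r + r)/r) := by
    rw [intervalIntegral.integral_add
      ((u_intble hr le_rfl hir).const_mul _)
      (((show ContinuousOn (fun z : ℝ => (z + r)⁻¹) (Set.Ici 0) from ContinuousOn.inv₀ (by fun_prop) (fun z hz => by
          simp only [Set.mem_Ici] at hz; positivity)).mono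
        (uIcc_sub le_rfl hir)).intervalIntegrable.const_mul 2),
      intervalIntegral.integral_const_mul, intervalIntegral.integral_const_mul,
      inv_integral hr]
    rfl
  calc h r ≤ _ := step1
    _ = _ := step2


lemma A₁_ge {r : ℝ} (hr : 0 < r) (hr4 : r ≤ 1/4) : 1/(4*r) - 1/2 ≤ A₁ r := by
  have h1 : (1:ℝ) ≤ 1/(2*r) := by
    rw [le_div_iff₀ (by positivity)]; linarith
  have h2 : 1/(2*r) ≤ 1/r := by
    apply div_le_div_of_nonneg_left (by norm_num) hr; linarith
  have hir : (0:ℝ) ≤ 1/r := by positivity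
  have hmr : (0:ℝ) ≤ 1/(2*r) := by positivity
  have split1 : A₁ r = (∫ z in (0:ℝ)..1, u r z) + ∫ z in (1:ℝ)..(1/r), u r z :=
    (intervalIntegral.integral_add_adjacent_intervals
      (u_intble hr le_rfl (by norm_num)) (u_intble hr (by norm_num) hir)).symm
  have split2 : (∫ z in (1:ℝ)..(1/r), u r z)
      = (∫ z in (1:ℝ)..(1/(2*r)), u r z) + ∫ z in (1/(2*r))..(1/r), u r z :=
    (intervalIntegral.integral_add_adjacent_intervals
      (u_intble hr (by norm_num) hmr) (u_intble hr hmr hir)).symm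
  have n1 : (0:ℝ) ≤ ∫ z in (0:ℝ)..1, u r z :=
    intervalIntegral.integral_nonneg (by norm_num) (fun z _ => u_nonneg r z)
  have n2 : (0:ℝ) ≤ ∫ z in (1/(2*r))..(1/r), u r z :=
    intervalIntegral.integral_nonneg h2 (fun z _ => u_nonneg r z)
  have mid : 1/(4*r) - 1/2 ≤ ∫ z in (1:ℝ)..(1/(2*r)), u r z := by
    have : (∫ z in (1:ℝ)..(1/(2*r)), (1/2 : ℝ)) ≤ ∫ z in (1:ℝ)..(1/(2*r)), u r z := by
      apply intervalIntegral.integral_mono_on h1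
        (intervalIntegrable_const) (u_intble hr (by norm_num) hmr)
      intro z hz
      exact u_ge_half hr hr4 hz.1 hz.2
    rw [intervalIntegral.integral_const, smul_eq_mul] at this
    have e : (1/(2*r) - 1) * (1/2 : ℝ) = 1/(4*r) - 1/2 := by
      field_simp; ring
    linarith [e ▸ this]
  rw [split1, split2]
  linarith

noncomputable def g (t : ℝ) : ℝ := -t^2/8 + 1/4 + 2*Real.log 2 + 8*t

lemma g_atBot : Tendsto g atTop atBot := by
  have hneg : Tendsto (fun t : ℝ => -t) atTop atBot := tendsto_neg_atTop_atBot
  apply tendsto_atBot_mono' atTop _ hneg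
  filter_upwards [eventually_ge_atTop (73:ℝ)] with t ht
  have hlog : Real.log 2 ≤ 1 := by
    have := Real.log_le_sub_one_of_pos (x := 2) (by norm_num); linarith
  unfold g; nlinarith

lemma sqrtinv_atTop : Tendsto (fun r : ℝ => (Real.sqrt r)⁻¹) (nhdsWithin 0 (Set.Ioi 0)) atTop := by
  apply tendsto_inv_nhdsGT_zero.comp
  rw [tendsto_nhdsWithin_iff]
  constructor
  · have := Real.continuous_sqrt.tendsto 0
    rw [Real.sqrt_zero] at this
    exact this.mono_left nhdsWithin_le_nhds
  · filter_upwards [self_mem_nhdsWithin] with r hr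
    exact Real.sqrt_pos.mpr hr

lemma h_le_g {r : ℝ} (hr : 0 < r) (hr4 : r ≤ 1/4) : h r ≤ g ((Real.sqrt r)⁻¹) := by
  have hs : 0 < Real.sqrt r := Real.sqrt_pos.mpr hr
  have hsq : ((Real.sqrt r)⁻¹)^2 = r⁻¹ := by
    rw [inv_pow, Real.sq_sqrt hr.le]
  have hlog1 : Real.log ((1/r + r)/r) ≤ Real.log 2 - 2 * Real.log r := by
    have harg : (1/r + r)/r ≤ 2/r^2 := by
      rw [div_le_div_iff₀ (by positivity) (by positivity)]
      have : r^2 ≤ 1 := by nlinarith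
      have h1r : 1 = r * (1/r) := by field_simp
      nlinarith [sq_nonneg r, mul_pos hr hr]
    calc Real.log ((1/r + r)/r) ≤ Real.log (2/r^2) :=
          Real.log_le_log (by positivity) harg
      _ = Real.log 2 - 2 * Real.log r := by
          rw [Real.log_div (by norm_num) (by positivity), Real.log_pow]
          push_cast; ring
  have hlogr : -Real.log r ≤ 2 * (Real.sqrt r)⁻¹ := by
    have e : Real.log ((Real.sqrt r)⁻¹) = -(Real.log r)/2 := by
      rw [Real.log_inv, Real.log_sqrt hr.le]; ring
    have := Real.log_le_sub_one_of_pos (x := (Real.sqrt r)⁻¹) (by positivity)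
    rw [e] at this
    linarith [inv_pos.mpr hs]
  have hA := A₁_ge hr hr4
  have hh := h_le hr hr4
  unfold g
  rw [hsq]
  have : -(1/2) * A₁ r ≤ -(1/2) * (1/(4*r) - 1/2) := by linarith
  have e8 : 1/(4*r) = r⁻¹/4 := by field_simp
  calc h r ≤ -(1/2) * A₁ r + 2 * Real.log ((1/r + r)/r) := hh
    _ ≤ -(1/2) * (1/(4*r) - 1/2) + 2 * (Real.log 2 - 2 * Real.log r) := by linarith
    _ ≤ -(r⁻¹)/8 + 1/4 + 2*Real.log 2 + 8 * (Real.sqrt r)⁻¹ := by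
        rw [e8]; linarith
    _ = -(r⁻¹)/8 + 1/4 + 2*Real.log 2 + 8 * (Real.sqrt r)⁻¹ := rfl

theorem stmt_10 : Filter.Tendsto h (nhdsWithin 0 (Set.Ioi 0)) Filter.atBot := by
  apply tendsto_atBot_mono' _ _ (g_atBot.comp sqrtinv_atTop)
  have hev : Set.Ioo (0:ℝ) (1/4) ∈ nhdsWithin (0:ℝ) (Set.Ioi 0) := by
    apply Ioo_mem_nhdsGT
    norm_num
  filter_upwards [hev] with r hr
  exact h_le_g hr.1 hr.2.le
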